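/- Let (α_1,…,α_m) ∈ ℚ^m ∩ [0,1]^m with α_1 + ⋯ + α_m ≤ 1. Then there are infinitely many primes p such that α_1,…,α_m add without carrying modulo p. -/

import Mathlib

open Finset

/-- Geometric series helper. -/
lemma geomAux {p : ℕ} (hp : 2 ≤ p) (c : ℝ) (k : ℕ) :
    HasSum (fun j : ℕ => c / (p : ℝ) ^ (j + k + 1)) (c / ((p : ℝ) ^ k * ((p : ℝ) - 1))) := by
  have hp1 : (1 : ℝ) < (p : ℝ) := by exact_mod_cast hp
  have hp0 : (0 : ℝ) < (p : ℝ) := by linarith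
  have hr0 : (0 : ℝ) ≤ (p : ℝ)⁻¹ := by positivity
  have hr1 : (p : ℝ)⁻¹ < 1 := by
    rw [inv_lt_one_iff₀]; right; exact hp1
  have h := (hasSum_geometric_of_lt_one hr0 hr1).mul_left (c / ((p : ℝ) ^ k * (p : ℝ)))
  have heq : (fun j : ℕ => c / ((p : ℝ) ^ k * (p : ℝ)) * ((p : ℝ)⁻¹) ^ j)
      = fun j : ℕ => c / (p : ℝ) ^ (j + k + 1) := by
    funext j
    rw [inv_pow, ← div_eq_mul_inv, div_div]
    congr 1
    ring
  have hval : c / ((p : ℝ) ^ k * (p : ℝ)) * (1 - (p : ℝ)⁻¹)⁻¹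
      = c / ((p : ℝ) ^ k * ((p : ℝ) - 1)) := by
    have h1 : (p : ℝ) - 1 ≠ 0 := by linarith
    have h2 : (p : ℝ) ≠ 0 := ne_of_gt hp0
    field_simp
  rw [heq, hval] at h
  exact h

lemma notLtAux {p : ℕ} (hp : 2 ≤ p) {α : ℝ} {d e : ℕ → ℕ} (k : ℕ)
    (hd1 : ∀ j, d j ≤ p - 1)
    (hd2 : HasSum (fun j => (d j : ℝ) / (p : ℝ) ^ (j + 1)) α)
    (he2 : HasSum (fun j => (e j : ℝ) / (p : ℝ) ^ (j + 1)) α)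
    (he3 : ∀ N, ∃ j ≥ N, e j ≠ 0)
    (hagree : ∀ j < k, d j = e j) : ¬ d k < e k := by
  intro hlt
  have hp1 : (1 : ℝ) < (p : ℝ) := by exact_mod_cast hp
  have hp0 : (0 : ℝ) < (p : ℝ) := by linarith
  set P : ℝ := (p : ℝ) ^ (k + 1) with hP
  have hPpos : 0 < P := by positivity
  set Sd : ℝ := ∑ j ∈ range (k + 1), (d j : ℝ) / (p : ℝ) ^ (j + 1) with hSdDef
  set Se : ℝ := ∑ j ∈ range (k + 1), (e j : ℝ) / (p : ℝ) ^ (j + 1) with hSeDef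
  -- tail of d
  have hTd : HasSum (fun j => (d (j + (k + 1)) : ℝ) / (p : ℝ) ^ (j + (k + 1) + 1)) (α - Sd) := by
    refine (hasSum_nat_add_iff (f := fun j => (d j : ℝ) / (p : ℝ) ^ (j + 1)) (k + 1)).mpr ?_
    rw [← hSdDef, sub_add_cancel]
    exact hd2
  have hTe : HasSum (fun j => (e (j + (k + 1)) : ℝ) / (p : ℝ) ^ (j + (k + 1) + 1)) (α - Se) := by
    refine (hasSum_nat_add_iff (f := fun j => (e j : ℝ) / (p : ℝ) ^ (j + 1)) (k + 1)).mpr ?_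
    rw [← hSeDef, sub_add_cancel]
    exact he2
  -- upper bound for tail of d
  have hB : α - Sd ≤ ((p : ℝ) - 1) / ((p : ℝ) ^ (k + 1) * ((p : ℝ) - 1)) := by
    refine hasSum_le (fun j => ?_) hTd (geomAux hp ((p : ℝ) - 1) (k + 1))
    have hnum : (d (j + (k + 1)) : ℝ) ≤ (p : ℝ) - 1 := by
      have := hd1 (j + (k + 1))
      have h1 : (d (j + (k + 1)) : ℝ) ≤ ((p - 1 : ℕ) : ℝ) := by exact_mod_cast this
      rwa [Nat.cast_sub (by omega), Nat.cast_one] at h1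
    gcongr
  have hB' : α - Sd ≤ 1 / P := by
    have h1 : (p : ℝ) - 1 ≠ 0 := by linarith
    rw [hP]
    calc α - Sd ≤ ((p : ℝ) - 1) / ((p : ℝ) ^ (k + 1) * ((p : ℝ) - 1)) := hB
      _ = 1 / (p : ℝ) ^ (k + 1) := by
          field_simp
  -- lower bound for tail of e
  have hEpos : 0 < α - Se := by
    obtain ⟨j0, hj0, hne⟩ := he3 (k + 1)
    have hterm : (e ((j0 - (k + 1)) + (k + 1)) : ℝ) / (p : ℝ) ^ ((j0 - (k + 1)) + (k + 1) + 1)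
        ≤ α - Se := le_hasSum hTe (j0 - (k + 1)) (fun j _ => by positivity)
    have hj : (j0 - (k + 1)) + (k + 1) = j0 := Nat.sub_add_cancel hj0
    rw [hj] at hterm
    have : (0 : ℝ) < (e j0 : ℝ) / (p : ℝ) ^ (j0 + 1) := by
      have : 0 < (e j0 : ℝ) := by exact_mod_cast Nat.pos_of_ne_zero hne
      positivity
    linarith
  -- prefix sums
  set C : ℝ := ∑ j ∈ range k, (e j : ℝ) / (p : ℝ) ^ (j + 1) with hC
  have hSd2 : Sd = C + (d k : ℝ) / P := by
    rw [hSdDef, Finset.sum_range_succ, hC]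
    congr 1
    exact Finset.sum_congr rfl (fun j hj => by rw [hagree j (Finset.mem_range.1 hj)])
  have hSe2 : Se = C + (e k : ℝ) / P := by
    rw [hSeDef, Finset.sum_range_succ]
  have hcast : (d k : ℝ) + 1 ≤ (e k : ℝ) := by exact_mod_cast hlt
  have key : (e k : ℝ) / P < (d k : ℝ) / P + 1 / P := by
    rw [hSd2] at hB'
    rw [hSe2] at hEpos
    linarith
  rw [← add_div] at key
  have key2 := (div_lt_div_iff₀ hPpos hPpos).1 key
  have key3 : (e k : ℝ) < (d k : ℝ) + 1 := lt_of_mul_lt_mul_right key2 (le_of_lt hPpos)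
  linarith

lemma uniqAux {p : ℕ} (hp : 2 ≤ p) {α : ℝ} {d e : ℕ → ℕ}
    (hd1 : ∀ j, d j ≤ p - 1)
    (hd2 : HasSum (fun j => (d j : ℝ) / (p : ℝ) ^ (j + 1)) α)
    (hd3 : ∀ N, ∃ j ≥ N, d j ≠ 0)
    (he1 : ∀ j, e j ≤ p - 1)
    (he2 : HasSum (fun j => (e j : ℝ) / (p : ℝ) ^ (j + 1)) α)
    (he3 : ∀ N, ∃ j ≥ N, e j ≠ 0) : ∀ k, d k = e k := by
  intro k
  induction k using Nat.strong_induction_on with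
  | _ k ih =>
    rcases lt_trichotomy (d k) (e k) with h | h | h
    · exact absurd h (notLtAux hp k hd1 hd2 he2 he3 ih)
    · exact h
    · exact absurd h (notLtAux hp k he1 he2 hd2 hd3 (fun j hj => (ih j hj).symm))

theorem stmt4 (m : ℕ) (α : Fin m → ℚ) (hα : ∀ i, α i ∈ Set.Icc (0 : ℚ) 1)
    (hsum : ∑ i, α i ≤ 1) :
    {p : ℕ | p.Prime ∧ ∀ d : Fin m → ℕ → ℕ,
      (∀ i, (∀ k, d i k ≤ p - 1) ∧
        HasSum (fun k => (d i k : ℝ) / (p : ℝ) ^ (k + 1)) ((α i : ℝ)) ∧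
        ((α i : ℝ) = 0 ∨ ∀ N, ∃ k ≥ N, d i k ≠ 0)) →
      ∀ k, ∑ i, d i k ≤ p - 1}.Infinite := by
  classical
  set q : ℕ := ∏ i, (α i).den with hqdef
  have hq0 : q ≠ 0 := by
    rw [hqdef]
    exact Finset.prod_ne_zero_iff.2 (fun i _ => (α i).den_nz)
  have hqQ : (0 : ℚ) < (q : ℚ) := by exact_mod_cast Nat.pos_of_ne_zero hq0
  set a : Fin m → ℕ := fun i => (α i).num.toNat * (q / (α i).den) with hadef
  have hdvd : ∀ i, (α i).den ∣ q := fun i => Finset.dvd_prod_of_mem _ (Finset.mem_univ i)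
  have ha : ∀ i, ((a i : ℚ)) = α i * q := by
    intro i
    have hd0 : ((α i).den : ℚ) ≠ 0 := by exact_mod_cast (α i).den_nz
    have hnum : (((α i).num.toNat : ℤ) : ℚ) = ((α i).num : ℚ) := by
      rw [Int.toNat_of_nonneg (Rat.num_nonneg.2 (hα i).1)]
    calc ((a i : ℚ)) = (((α i).num.toNat : ℤ) : ℚ) * ((q / (α i).den : ℕ) : ℚ) := by
          rw [hadef]; push_cast; ring
      _ = ((α i).num : ℚ) * ((q : ℚ) / ((α i).den : ℚ)) := by
          rw [hnum, Nat.cast_div (hdvd i) hd0]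
      _ = ((α i).num : ℚ) / ((α i).den : ℚ) * (q : ℚ) := by ring
      _ = α i * q := by rw [Rat.num_div_den]
  have ha_le : ∀ i, a i ≤ q := by
    intro i
    have : ((a i : ℚ)) ≤ (q : ℚ) := by
      rw [ha i]
      calc α i * q ≤ 1 * q := by
            apply mul_le_mul_of_nonneg_right (hα i).2 (le_of_lt hqQ)
        _ = q := one_mul _
    exact_mod_cast this
  have ha_sum : ∑ i, a i ≤ q := by
    have : ((∑ i, a i : ℕ) : ℚ) ≤ (q : ℚ) := by
      push_cast
      calc ∑ i, ((a i : ℚ)) = ∑ i, α i * q := by exact Finset.sum_congr rfl (fun i _ => ha i)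
        _ = (∑ i, α i) * q := by rw [← Finset.sum_mul]
        _ ≤ 1 * q := mul_le_mul_of_nonneg_right hsum (le_of_lt hqQ)
        _ = q := one_mul _
    exact_mod_cast this
  have ha_pos : ∀ i, α i ≠ 0 → a i ≠ 0 := by
    intro i h0 hcon
    apply h0
    have : ((a i : ℚ)) = 0 := by rw [hcon]; norm_num
    rw [ha i] at this
    rcases mul_eq_zero.1 this with h | h
    · exact h
    · exact absurd h (ne_of_gt hqQ)
  apply Set.infinite_of_forall_exists_gt
  intro n
  obtain ⟨p, hp, hnp, hmod⟩ := Nat.exists_prime_gt_modEq_one n hq0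
  refine ⟨p, ⟨hp, ?_⟩, hnp⟩
  intro d hd k
  have hp2 : 2 ≤ p := hp.two_le
  have hdvd1 : q ∣ p - 1 := (Nat.modEq_iff_dvd' (by omega : 1 ≤ p)).1 hmod.symm
  obtain ⟨t, ht⟩ := hdvd1
  have ht1 : 1 ≤ t := by
    rcases Nat.eq_zero_or_pos t with h | h
    · rw [h, mul_zero] at ht; omega
    · exact h
  have hpR : (1 : ℝ) < (p : ℝ) := by exact_mod_cast hp2
  -- key claim
  have claim : ∀ i, d i k ≤ t * a i := by
    intro i
    obtain ⟨hb, hs, hnt⟩ := hd i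
    by_cases h0 : α i = 0
    · have hz : HasSum (fun k => (d i k : ℝ) / (p : ℝ) ^ (k + 1)) 0 := by
        rw [h0] at hs; simpa using hs
      have hzero := (hasSum_zero_iff_of_nonneg (fun k => by positivity)).1 hz
      have : (d i k : ℝ) / (p : ℝ) ^ (k + 1) = 0 := congrFun hzero k
      have hdk : (d i k : ℝ) = 0 := by
        field_simp at this
        exact_mod_cast this
      have : d i k = 0 := by exact_mod_cast hdk
      omega
    · have hnt' : ∀ N, ∃ j ≥ N, d i j ≠ 0 := by
        rcases hnt with h | h
        · exact absurd (by exact_mod_cast h : α i = 0) h0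
        · exact h
      -- explicit expansion
      have he1 : ∀ j : ℕ, t * a i ≤ p - 1 := by
        intro j
        rw [ht]
        calc t * a i ≤ t * q := Nat.mul_le_mul_left t (ha_le i)
          _ = q * t := Nat.mul_comm t q
      have hpq : ((p : ℝ) - 1) = ((q : ℝ) * t) := by
        have h1 : ((p - 1 : ℕ) : ℝ) = (p : ℝ) - 1 := by
          rw [Nat.cast_sub (by omega), Nat.cast_one]
        rw [← h1, ht]
        push_cast
        ring
      have he2 : HasSum (fun j : ℕ => ((t * a i : ℕ) : ℝ) / (p : ℝ) ^ (j + 1)) ((α i : ℝ)) := by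
        have h := geomAux hp2 ((t * a i : ℕ) : ℝ) 0
        simp only [pow_zero, one_mul, Nat.add_zero] at h
        have hval : ((t * a i : ℕ) : ℝ) / ((p : ℝ) - 1) = ((α i : ℝ)) := by
          have haR : ((a i : ℝ)) = ((α i : ℝ)) * (q : ℝ) := by exact_mod_cast ha i
          have hqR : (q : ℝ) ≠ 0 := by exact_mod_cast hq0
          have htR : (t : ℝ) ≠ 0 := by
            have : (0 : ℝ) < (t : ℝ) := by exact_mod_cast ht1
            exact ne_of_gt this
          rw [hpq]
          push_cast
          rw [haR]
          field_simp
        rw [hval] at h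
        exact h
      have he3 : ∀ N : ℕ, ∃ j ≥ N, t * a i ≠ 0 :=
        fun N => ⟨N, le_refl N, Nat.mul_ne_zero (by omega) (ha_pos i h0)⟩
      have := uniqAux hp2 hb hs hnt' he1 he2 he3 k
      omega
  calc ∑ i, d i k ≤ ∑ i, t * a i := Finset.sum_le_sum (fun i _ => claim i)
    _ = t * ∑ i, a i := by rw [Finset.mul_sum]
    _ ≤ t * q := Nat.mul_le_mul_left t ha_sum
    _ = p - 1 := by rw [Nat.mul_comm, ← ht]
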